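/- For any directed acyclic graph G whose edges respect an ordering (edge (i,j) implies i < j), the worst-case efficiency γ(G) of the generalized distributed greedy algorithm satisfies γ(G) ≥ 1/(α*(G) + 1), where α*(G) is the fractional independence number (the optimal value of the LP relaxation of the maximum independent set problem over all cliques of G). -/

import Mathlib

open Finset

/-- Marginal gains are monotone decreasing (allowing `x ∈ B`). -/
lemma ggl_marg {α : Type*} [DecidableEq α] (f : Finset α → ℝ)
    (hmono : ∀ A B : Finset α, A ⊆ B → f A ≤ f B)
    (hsub : ∀ A B : Finset α, A ⊆ B → ∀ x ∉ B,
      f (insert x B) - f B ≤ f (insert x A) - f A) :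
    ∀ A B : Finset α, A ⊆ B → ∀ x,
      f (insert x B) - f B ≤ f (insert x A) - f A := by
  intro A B hAB x
  by_cases hx : x ∈ B
  · rw [Finset.insert_eq_self.2 hx]
    have := hmono A (insert x A) (Finset.subset_insert _ _)
    linarith
  · exact hsub A B hAB x hx

/-- Set version of submodularity: for `A ⊆ B`,
`f (B ∪ C) - f B ≤ f (A ∪ C) - f A`. -/
lemma ggl_sub_set {α : Type*} [DecidableEq α] (f : Finset α → ℝ)
    (hmono : ∀ A B : Finset α, A ⊆ B → f A ≤ f B)
    (hsub : ∀ A B : Finset α, A ⊆ B → ∀ x ∉ B,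
      f (insert x B) - f B ≤ f (insert x A) - f A) :
    ∀ C A B : Finset α, A ⊆ B → f (B ∪ C) - f B ≤ f (A ∪ C) - f A := by
  intro C
  induction C using Finset.induction_on with
  | empty => intro A B _; simp
  | @insert x C hx ih =>
      intro A B hAB
      have h1 : f (insert x (B ∪ C)) - f (B ∪ C) ≤
          f (insert x (A ∪ C)) - f (A ∪ C) :=
        ggl_marg f hmono hsub _ _ (Finset.union_subset_union hAB (Finset.Subset.refl C)) x
      have h2 := ih A B hAB
      have e1 : B ∪ insert x C = insert x (B ∪ C) := by
        simp [Finset.union_insert]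
      have e2 : A ∪ insert x C = insert x (A ∪ C) := by
        simp [Finset.union_insert]
      rw [e1, e2]
      linarith

/-- lower bound `γ(G) ≥ 1/(α*(G)+1)` for the generalized distributed
greedy algorithm, stated as: for every instance, `f(x^opt) ≤ (α*(G)+1) · f(x^sol)`. -/
theorem generalized_greedy_lower_bound {α : Type*} [DecidableEq α] {n : ℕ}
    (E : Fin n → Fin n → Prop) [DecidableRel E]
    (hE : ∀ i j, E i j → i < j)
    (astar : ℝ)
    (hastar : IsGreatest {s : ℝ | ∃ z : Fin n → ℝ,
      (∀ i, 0 ≤ z i) ∧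
      (∀ c : Finset (Fin n), (∀ i ∈ c, ∀ j ∈ c, i ≠ j → E i j ∨ E j i) →
        ∑ i ∈ c, z i ≤ 1) ∧
      s = ∑ i, z i} astar)
    (f : Finset α → ℝ)
    (hnorm : f ∅ = 0)
    (hmono : ∀ A B : Finset α, A ⊆ B → f A ≤ f B)
    (hsub : ∀ A B : Finset α, A ⊆ B → ∀ x ∉ B,
      f (insert x B) - f B ≤ f (insert x A) - f A)
    (X : Fin n → Finset (Finset α))
    (sol opt : Fin n → Finset α)
    (hsolX : ∀ i, sol i ∈ X i)
    (hgreedy : ∀ i : Fin n, ∀ y ∈ X i,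
      f (y ∪ (univ.filter (fun j => E j i)).biUnion sol) ≤
        f (sol i ∪ (univ.filter (fun j => E j i)).biUnion sol))
    (hoptX : ∀ i, opt i ∈ X i)
    (hopt : ∀ y : Fin n → Finset α, (∀ i, y i ∈ X i) →
      f (univ.biUnion y) ≤ f (univ.biUnion opt)) :
    f (univ.biUnion opt) ≤ (astar + 1) * f (univ.biUnion sol) := by
  classical
  -- notation
  set S : Finset α := univ.biUnion sol with hS
  set NS : Fin n → Finset α := fun i => (univ.filter (fun j => E j i)).biUnion sol with hNS
  set Dsol : Fin n → ℝ := fun i => f (sol i ∪ NS i) - f (NS i) with hDsol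
  set Dopt : Fin n → ℝ := fun i => f (opt i ∪ NS i) - f (NS i) with hDopt
  have fnonneg : ∀ A : Finset α, 0 ≤ f A := by
    intro A
    have := hmono ∅ A (Finset.empty_subset A)
    linarith
  have hNSsub : ∀ i, NS i ⊆ S := by
    intro i
    apply Finset.biUnion_subset.2
    intro j _
    exact Finset.subset_biUnion_of_mem sol (Finset.mem_univ j)
  have hsolS : ∀ i, sol i ⊆ S := fun i => Finset.subset_biUnion_of_mem sol (Finset.mem_univ i)
  -- greedy step bound
  have hDle : ∀ i, Dopt i ≤ Dsol i := by
    intro i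
    have := hgreedy i (opt i) (hoptX i)
    simp only [hDsol, hDopt]
    have hle : f (opt i ∪ NS i) ≤ f (sol i ∪ NS i) := this
    linarith
  have hDsolnn : ∀ i, 0 ≤ Dsol i := by
    intro i
    have := hmono (NS i) (sol i ∪ NS i) Finset.subset_union_right
    simp only [hDsol]; linarith
  -- clique telescoping
  have hclq : ∀ c : Finset (Fin n),
      (∀ i ∈ c, ∀ j ∈ c, i ≠ j → E i j ∨ E j i) →
      ∑ i ∈ c, Dsol i ≤ f (c.biUnion sol) := by
    intro c
    induction c using Finset.induction_on_max with
    | empty => intro _; simp [hnorm]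
    | insert a s hlt ih =>
        intro hc
        have has : a ∉ s := fun h => lt_irrefl a (hlt a h)
        have hcs : ∀ i ∈ s, ∀ j ∈ s, i ≠ j → E i j ∨ E j i := by
          intro i hi j hj hij
          exact hc i (Finset.mem_insert_of_mem hi) j (Finset.mem_insert_of_mem hj) hij
        have ih' := ih hcs
        -- each sol j for j ∈ s is inside NS a
        have hsubNS : s.biUnion sol ⊆ NS a := by
          apply Finset.biUnion_subset.2
          intro j hj
          have hne : j ≠ a := fun h => has (h ▸ hj)
          have := hc j (Finset.mem_insert_of_mem hj) a (Finset.mem_insert_self a s) hne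
          have hEja : E j a := by
            rcases this with h | h
            · exact h
            · exact absurd (hE a j h) (not_lt.2 (le_of_lt (hlt j hj)))
          refine Finset.subset_biUnion_of_mem sol ?_
          simp [hEja]
        have hstep : Dsol a ≤ f (sol a ∪ s.biUnion sol) - f (s.biUnion sol) := by
          have := ggl_sub_set f hmono hsub (sol a) (s.biUnion sol) (NS a) hsubNS
          simp only [hDsol]
          have e : NS a ∪ sol a = sol a ∪ NS a := Finset.union_comm _ _
          have e' : s.biUnion sol ∪ sol a = sol a ∪ s.biUnion sol := Finset.union_comm _ _
          rw [e, e'] at this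
          linarith
        rw [Finset.sum_insert has, Finset.biUnion_insert]
        linarith
  -- telescoping over all agents with opt
  have key2 : ∀ k : ℕ, k ≤ n →
      f (S ∪ (univ.filter (fun j : Fin n => (j : ℕ) < k)).biUnion opt) ≤
        f S + ∑ i ∈ univ.filter (fun j : Fin n => (j : ℕ) < k), Dopt i := by
    intro k
    induction k with
    | zero =>
        intro _
        have : (univ.filter (fun j : Fin n => (j : ℕ) < 0)) = ∅ := by
          apply Finset.filter_false_of_mem; intro x _; omega
        simp [this]
    | succ k ih =>
        intro hk
        have hk' : k < n := hk
        have ih' := ih (le_of_lt hk')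
        set i : Fin n := ⟨k, hk'⟩ with hi
        have hfilter : (univ.filter (fun j : Fin n => (j : ℕ) < k + 1)) =
            insert i (univ.filter (fun j : Fin n => (j : ℕ) < k)) := by
          ext j
          simp only [Finset.mem_filter, Finset.mem_univ, true_and, Finset.mem_insert]
          constructor
          · intro h
            rcases Nat.lt_succ_iff_lt_or_eq.1 h with h' | h'
            · exact Or.inr h'
            · exact Or.inl (Fin.ext h')
          · rintro (h | h)
            · have : (j : ℕ) = k := by rw [h]
              omega
            · omega
        have hinotin : i ∉ univ.filter (fun j : Fin n => (j : ℕ) < k) := by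
          simp [hi]
        rw [hfilter, Finset.sum_insert hinotin, Finset.biUnion_insert]
        set T : Finset α := (univ.filter (fun j : Fin n => (j : ℕ) < k)).biUnion opt with hT
        have hNSsub' : NS i ⊆ S ∪ T := (hNSsub i).trans Finset.subset_union_left
        have hstep := ggl_sub_set f hmono hsub (opt i) (NS i) (S ∪ T) hNSsub'
        have e1 : S ∪ (opt i ∪ T) = (S ∪ T) ∪ opt i := by
          rw [Finset.union_comm (opt i) T, ← Finset.union_assoc]
        have e2 : NS i ∪ opt i = opt i ∪ NS i := Finset.union_comm _ _
        rw [e2] at hstep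
        rw [e1]
        simp only [hDopt]
        linarith
  -- apply at k = n
  have hfull : (univ.filter (fun j : Fin n => (j : ℕ) < n)) = (univ : Finset (Fin n)) := by
    apply Finset.filter_true_of_mem; intro x _; exact x.isLt
  have key2' : f (S ∪ univ.biUnion opt) ≤ f S + ∑ i, Dopt i := by
    have := key2 n (le_refl n)
    rw [hfull] at this
    exact this
  -- Σ Dsol ≤ astar * f S
  have hsum : ∑ i, Dsol i ≤ astar * f S := by
    rcases eq_or_lt_of_le (fnonneg S) with h0 | hpos
    · -- f S = 0 forces all Dsol i = 0
      have hz : ∀ i, Dsol i = 0 := by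
        intro i
        have h1 : f (sol i ∪ NS i) ≤ f S :=
          hmono _ _ (Finset.union_subset (hsolS i) (hNSsub i))
        have h2 : 0 ≤ f (NS i) := fnonneg _
        have h3 : 0 ≤ f (sol i ∪ NS i) := fnonneg _
        have h4 : f (NS i) ≤ f S := hmono _ _ (hNSsub i)
        have := hDsolnn i
        simp only [hDsol] at this ⊢
        nlinarith [h0.symm]
      simp [hz, ← h0]
    · -- z i := Dsol i / f S is LP-feasible
      set z : Fin n → ℝ := fun i => Dsol i / f S with hzdef
      have hmem : (∑ i, z i) ∈ {s : ℝ | ∃ z : Fin n → ℝ,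
          (∀ i, 0 ≤ z i) ∧
          (∀ c : Finset (Fin n), (∀ i ∈ c, ∀ j ∈ c, i ≠ j → E i j ∨ E j i) →
            ∑ i ∈ c, z i ≤ 1) ∧
          s = ∑ i, z i} := by
        refine ⟨z, fun i => div_nonneg (hDsolnn i) (le_of_lt hpos), ?_, rfl⟩
        intro c hc
        have h1 := hclq c hc
        have h2 : f (c.biUnion sol) ≤ f S := by
          apply hmono
          apply Finset.biUnion_subset.2
          intro j _
          exact hsolS j
        have : ∑ i ∈ c, z i = (∑ i ∈ c, Dsol i) / f S := by
          simp [hzdef, Finset.sum_div]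
        rw [this]
        rw [div_le_one hpos]
        linarith
      have hle := hastar.2 hmem
      have : ∑ i, z i = (∑ i, Dsol i) / f S := by
        simp [hzdef, Finset.sum_div]
      rw [this, div_le_iff₀ hpos] at hle
      linarith [hle]
  -- final chain
  have h1 : f (univ.biUnion opt) ≤ f (S ∪ univ.biUnion opt) :=
    hmono _ _ Finset.subset_union_right
  have h2 : ∑ i, Dopt i ≤ ∑ i, Dsol i := Finset.sum_le_sum fun i _ => hDle i
  have : f (univ.biUnion opt) ≤ f S + astar * f S := by linarith
  linarith [this]
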